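/- Pruning of full leaf components preserves LP feasibility: let x̄ be a feasible solution to the subtour elimination relaxation SER for terminal set R, and let C* be a chosen full component (x̄_{C*} > 0) whose terminal set R_{C*} shares exactly one terminal v* with the union of terminal sets of all other chosen full components. Then x̄_{C*} = 1, and the solution obtained by setting x̄_{C*} := 0 is feasible for SER on the reduced terminal set R \ (R_{C*} \ {v*}). -/
import Mathlib


open Finset

open scoped Classical in
/-- Pruning of full leaf components preserves SER feasibility.
`ι` indexes the `k`-restricted full components, `Rset i ⊆ R` their terminal sets,
and `x` a feasible SER solution (bounds, spanning constraint, subtour elimination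
constraints, and the valid covering constraints).  If a chosen component `istar`
(`x istar > 0`) shares exactly one terminal `vstar` with the union of the terminal sets
of all other chosen components, then `x istar = 1`, and setting `x istar := 0` yields a
feasible SER solution for the reduced terminal set `R \ (Rset istar \ {vstar})`. -/
theorem prune_full_leaf_component
    {V : Type*} [Fintype V] [DecidableEq V]
    {ι : Type*} [Fintype ι] [DecidableEq ι]
    (R : Finset V) (Rset : ι → Finset V) (x : ι → ℝ)
    (hsub : ∀ i, Rset i ⊆ R) (hcard : ∀ i, 2 ≤ (Rset i).card)
    (hbounds : ∀ i, 0 ≤ x i ∧ x i ≤ 1)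
    (hspan : ∑ i, (((Rset i).card : ℝ) - 1) * x i = (R.card : ℝ) - 1)
    (hsubtour : ∀ R' ⊆ R, 2 ≤ R'.card →
      ∑ i ∈ Finset.univ.filter (fun i => (R' ∩ Rset i).Nonempty),
          (((R' ∩ Rset i).card : ℝ) - 1) * x i ≤ (R'.card : ℝ) - 1)
    (hcover : ∀ v ∈ R, 1 ≤ ∑ i ∈ Finset.univ.filter (fun i => v ∈ Rset i), x i)
    (istar : ι) (hpos : 0 < x istar) (vstar : V) (hvstar : vstar ∈ Rset istar)
    (hleaf : Rset istar ∩
        ((Finset.univ.filter (fun j => j ≠ istar ∧ 0 < x j)).biUnion Rset) = {vstar}) :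
    x istar = 1 ∧
    (∀ i, 0 ≤ Function.update x istar 0 i ∧ Function.update x istar 0 i ≤ 1) ∧
    (∑ i, (((Rset i).card : ℝ) - 1) * Function.update x istar 0 i
        = (((R \ (Rset istar \ {vstar})).card : ℝ)) - 1) ∧
    (∀ R' ⊆ R \ (Rset istar \ {vstar}), 2 ≤ R'.card →
      ∑ i ∈ Finset.univ.filter (fun i => (R' ∩ Rset i).Nonempty),
          (((R' ∩ Rset i).card : ℝ) - 1) * Function.update x istar 0 i
        ≤ (R'.card : ℝ) - 1) := by

  classical
  -- find a terminal u ∈ Rset istar with u ≠ vstar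
  obtain ⟨u, hu, hune⟩ := Finset.exists_mem_ne
    (lt_of_lt_of_le one_lt_two (hcard istar)) vstar
  -- x istar = 1
  have hx1 : x istar = 1 := by
    have hc := hcover u (hsub istar hu)
    have hzero : ∀ i ∈ Finset.univ.filter (fun i => u ∈ Rset i), i ≠ istar → x i = 0 := by
      intro i hi hne
      simp only [Finset.mem_filter] at hi
      by_contra hx
      have hxi : 0 < x i := lt_of_le_of_ne (hbounds i).1 (Ne.symm hx)
      have : u ∈ Rset istar ∩ ((Finset.univ.filter (fun j => j ≠ istar ∧ 0 < x j)).biUnion Rset) := by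
        refine Finset.mem_inter.mpr ⟨hu, Finset.mem_biUnion.mpr ⟨i, ?_, hi.2⟩⟩
        simp [hne, hxi]
      rw [hleaf] at this
      exact hune (Finset.mem_singleton.mp this)
    have hsum : ∑ i ∈ Finset.univ.filter (fun i => u ∈ Rset i), x i = x istar := by
      refine Finset.sum_eq_single istar hzero ?_
      intro h
      exact absurd (Finset.mem_filter.mpr ⟨Finset.mem_univ istar, hu⟩) h
    rw [hsum] at hc
    exact le_antisymm (hbounds istar).2 hc
  refine ⟨hx1, ?_, ?_, ?_⟩
  · intro i
    by_cases h : i = istar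
    · subst h; simp
    · simp [Function.update_of_ne h, hbounds i]
  · -- spanning constraint for the reduced set
    have hsplit : ∀ y : ι → ℝ, ∑ i, (((Rset i).card : ℝ) - 1) * y i
        = (((Rset istar).card : ℝ) - 1) * y istar
          + ∑ i ∈ Finset.univ.erase istar, (((Rset i).card : ℝ) - 1) * y i := by
      intro y
      rw [← Finset.add_sum_erase _ _ (Finset.mem_univ istar)]
    have herase : ∑ i ∈ Finset.univ.erase istar, (((Rset i).card : ℝ) - 1) * Function.update x istar 0 i
        = ∑ i ∈ Finset.univ.erase istar, (((Rset i).card : ℝ) - 1) * x i := by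
      refine Finset.sum_congr rfl ?_
      intro i hi
      rw [Function.update_of_ne (Finset.ne_of_mem_erase hi)]
    have hval : ∑ i, (((Rset i).card : ℝ) - 1) * Function.update x istar 0 i
        = ((R.card : ℝ) - 1) - (((Rset istar).card : ℝ) - 1) := by
      rw [hsplit, herase, Function.update_self]
      have := hspan
      rw [hsplit x, hx1] at this
      linarith
    rw [hval]
    -- cardinality computation
    have hSsub : Rset istar \ {vstar} ⊆ R := (Finset.sdiff_subset).trans (hsub istar)
    have hcardS : (Rset istar \ {vstar}).card = (Rset istar).card - 1 := by
      rw [Finset.sdiff_singleton_eq_erase, Finset.card_erase_of_mem hvstar]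
    have hcardR : (R \ (Rset istar \ {vstar})).card = R.card - ((Rset istar).card - 1) := by
      rw [Finset.card_sdiff_of_subset hSsub, hcardS]
    have h2 : 2 ≤ (Rset istar).card := hcard istar
    have hRS : (Rset istar).card ≤ R.card := Finset.card_le_card (hsub istar)
    rw [hcardR]
    have h1S : 1 ≤ (Rset istar).card := le_trans one_le_two h2
    have : (Rset istar).card - 1 ≤ R.card := le_trans (Nat.sub_le _ _) hRS
    push_cast [Nat.cast_sub this, Nat.cast_sub h1S]
    ring
  · -- subtour constraints
    intro R' hR' hR'card
    have hR'R : R' ⊆ R := hR'.trans Finset.sdiff_subset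
    have hold := hsubtour R' hR'R hR'card
    refine le_trans (Finset.sum_le_sum ?_) hold
    intro i hi
    simp only [Finset.mem_filter] at hi
    have hcpos : (1 : ℝ) ≤ ((R' ∩ Rset i).card : ℝ) := by
      exact_mod_cast Finset.one_le_card.mpr hi.2
    have hnn : (0 : ℝ) ≤ ((R' ∩ Rset i).card : ℝ) - 1 := by linarith
    refine mul_le_mul_of_nonneg_left ?_ hnn
    by_cases h : i = istar
    · subst h; simp [le_of_lt hpos]
    · rw [Function.update_of_ne h]
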